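/- Let β = (β_n) be a positive, non-increasing summable sequence and set B_n = ∑_{k > n} β_k. If β_n ≤ B_n for all n ≥ 1, then the subsum set SubSum(β) = { ∑_{n∈S} β_n : S ⊆ ℕ } equals the full interval [0, B₀], where B₀ = ∑_{k≥1} β_k. -/

import Mathlib

/-- The subsum set of a sequence: all sums of subseries. -/
def SubSum (β : ℕ → ℝ) : Set ℝ :=
  {x | ∃ S : Set ℕ, HasSum (S.indicator β) x}

/-- Greedy remainder sequence. -/
noncomputable def greedy (β : ℕ → ℝ) (x : ℝ) : ℕ → ℝ
  | 0 => x
  | n + 1 => if β n ≤ greedy β x n then greedy β x n - β n else greedy β x n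

theorem stmt12 (β : ℕ → ℝ) (hpos : ∀ n, 0 < β n) (hsum : Summable β)
    (hmono : Antitone β)
    -- `β_n ≤ B_n = ∑_{k > n} β_k` for every `n`
    (hdom : ∀ n, β n ≤ ∑' k, β (n + 1 + k)) :
    SubSum β = Set.Icc 0 (∑' n, β n) := by
  classical
  have hβ0 : ∀ n, 0 ≤ β n := fun n => (hpos n).le
  ext x
  simp only [SubSum, Set.mem_setOf_eq, Set.mem_Icc]
  constructor
  · rintro ⟨S, hS⟩
    have hnn : ∀ n, 0 ≤ S.indicator β n := fun n =>
      Set.indicator_nonneg (fun i _ => hβ0 i) n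
    refine ⟨hasSum_le hnn hasSum_zero hS, ?_⟩
    exact hasSum_le (fun n => Set.indicator_le_self' (fun i _ => hβ0 i) n) hS hsum.hasSum
  · rintro ⟨hx0, hx1⟩
    set r := greedy β x with hr
    set S : Set ℕ := {n | β n ≤ r n} with hSdef
    have hind : ∀ n, S.indicator β n = if β n ≤ r n then β n else 0 := by
      intro n
      simp [Set.indicator_apply, hSdef]
    -- tail sums
    set T : ℕ → ℝ := fun n => ∑' k, β (n + k) with hT
    have hTsum : ∀ n, Summable fun k => β (n + k) := by
      intro n
      have := (summable_nat_add_iff n).2 hsum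
      simpa [add_comm] using this
    have hTrec : ∀ n, T n = β n + T (n + 1) := by
      intro n
      have := (hTsum n).tsum_eq_zero_add
      simpa [hT, add_assoc, add_comm, add_left_comm] using this
    -- invariants
    have hr0 : ∀ n, 0 ≤ r n := by
      intro n
      induction n with
      | zero => simpa [hr, greedy] using hx0
      | succ n ih =>
        by_cases h : β n ≤ r n
        · simp only [hr, greedy, if_pos (show β n ≤ greedy β x n from h)]
          linarith
        · simpa [hr, greedy, if_neg (show ¬β n ≤ greedy β x n from h)] using ih
    have hrT : ∀ n, r n ≤ T n := by
      intro n
      induction n with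
      | zero =>
        have : T 0 = ∑' n, β n := by simp [hT]
        simpa [hr, greedy, this] using hx1
      | succ n ih =>
        by_cases h : β n ≤ r n
        · have := hTrec n
          simp only [hr, greedy, if_pos (show β n ≤ greedy β x n from h)]
          linarith
        · have h2 : r n < β n := not_le.1 h
          have h3 : β n ≤ T (n + 1) := by
            have := hdom n
            simpa [hT, add_assoc] using this
          simp only [hr, greedy, if_neg (show ¬β n ≤ greedy β x n from h)]
          linarith
    have hpart : ∀ n, ∑ i ∈ Finset.range n, S.indicator β i = x - r n := by
      intro n
      induction n with
      | zero => simp [hr, greedy]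
      | succ n ih =>
        rw [Finset.sum_range_succ, ih, hind n]
        by_cases h : β n ≤ r n
        · simp only [hr, greedy, if_pos (show β n ≤ greedy β x n from h)]; ring
        · simp only [hr, greedy, if_neg (show ¬β n ≤ greedy β x n from h)]; ring
    -- r n → 0
    have hTtend : Filter.Tendsto T Filter.atTop (nhds 0) := by
      have h1 : Filter.Tendsto (fun n => ∑ i ∈ Finset.range n, β i) Filter.atTop
          (nhds (∑' n, β n)) := hsum.hasSum.tendsto_sum_nat
      have h2 : ∀ n, T n = (∑' n, β n) - ∑ i ∈ Finset.range n, β i := by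
        intro n
        have := hsum.sum_add_tsum_nat_add n
        have h3 : (∑' k, β (k + n)) = T n := by
          simp [hT, add_comm]
        linarith [this]
      have : Filter.Tendsto (fun n => (∑' n, β n) - ∑ i ∈ Finset.range n, β i)
          Filter.atTop (nhds ((∑' n, β n) - ∑' n, β n)) := tendsto_const_nhds.sub h1
      simpa [h2] using this.congr (fun n => (h2 n).symm)
    have hrtend : Filter.Tendsto r Filter.atTop (nhds 0) :=
      squeeze_zero hr0 hrT hTtend
    -- partial sums of indicator tend to x
    have hpt : Filter.Tendsto (fun n => ∑ i ∈ Finset.range n, S.indicator β i)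
        Filter.atTop (nhds x) := by
      have : Filter.Tendsto (fun n => x - r n) Filter.atTop (nhds (x - 0)) :=
        tendsto_const_nhds.sub hrtend
      simpa [hpart] using this.congr (fun n => (hpart n).symm)
    have hsummable : Summable (S.indicator β) := hsum.indicator S
    have h1 : Filter.Tendsto (fun n => ∑ i ∈ Finset.range n, S.indicator β i)
        Filter.atTop (nhds (∑' n, S.indicator β n)) :=
      hsummable.hasSum.tendsto_sum_nat
    have hx : (∑' n, S.indicator β n) = x := tendsto_nhds_unique h1 hpt
    exact ⟨S, hx ▸ hsummable.hasSum⟩
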